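/- Let k ≥ 2 be a natural number and C̃ ≥ 1 a real number such that |⟨φ^t⟩| ≤ (C̃ t)^{kt/2} and |⟨π^t⟩| ≤ (C̃ t)^{kt/2} for every natural number t ≥ 1. Then for every natural number s ≥ 1, |⟨(φ² + π²)^s⟩| ≤ 2 (2s + 1) (8 C̃ s)^{ks}. -/

import Mathlib

open scoped ComplexOrder


def invc10 : List Bool → ℕ
  | [] => 0
  | (true :: l) => invc10 l
  | (false :: l) => l.count true + invc10 l

lemma invc10_le_sq (l : List Bool) : invc10 l ≤ l.length ^ 2 := by
  induction l with
  | nil => simp [invc10]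
  | cons b l ih =>
    have hc := List.count_le_length (a := true) (l := l)
    cases b <;> simp only [invc10, List.length_cons] <;> nlinarith

lemma invc10_swap (x y : List Bool) :
    invc10 (x ++ false :: true :: y) = invc10 (x ++ true :: false :: y) + 1 := by
  induction x with
  | nil => simp [invc10, List.count_cons]; omega
  | cons b x ih =>
    cases b <;> simp only [List.cons_append, invc10] <;>
      simp [List.count_append, List.count_cons, ih] <;> omega

lemma invc10_sorted {l : List Bool} (h : invc10 l = 0) :
    l = List.replicate (l.count true) true ++ List.replicate (l.count false) false := by
  induction l with
  | nil => simp
  | cons b l ih =>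
    cases b with
    | true =>
      simp only [invc10] at h
      have h2 := ih h
      have ct : (true :: l).count true = l.count true + 1 := by simp
      have cf : (true :: l).count false = l.count false := by simp
      rw [ct, cf, List.replicate_succ, List.cons_append, ← h2]
    | false =>
      simp only [invc10] at h
      have h1 : l.count true = 0 := by omega
      have h2 := ih (by omega)
      rw [h1] at h2
      simp only [List.replicate_zero, List.nil_append] at h2
      have ct : (false :: l).count true = 0 := by simp [h1]
      have cf : (false :: l).count false = l.count false + 1 := by simp
      rw [ct, cf, List.replicate_zero, List.nil_append, List.replicate_succ, ← h2]

lemma invc10_exists {l : List Bool} (h : 0 < invc10 l) :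
    ∃ x y, l = x ++ false :: true :: y := by
  induction l with
  | nil => simp [invc10] at h
  | cons b l ih =>
    cases b with
    | true =>
      simp only [invc10] at h
      obtain ⟨x, y, hxy⟩ := ih h
      exact ⟨true :: x, y, by simp [hxy]⟩
    | false =>
      simp only [invc10] at h
      rcases Nat.eq_zero_or_pos (invc10 l) with h0 | h0
      · have hct : 0 < l.count true := by omega
        match l, h0, hct with
        | true :: tl, _, _ => exact ⟨[], tl, rfl⟩
        | false :: tl, h0, hct =>
          exfalso
          simp only [invc10] at h0
          have : (false :: tl).count true = tl.count true := by simp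
          omega
      · obtain ⟨x, y, hxy⟩ := ih h0
        exact ⟨false :: x, y, by simp [hxy]⟩

lemma invc10_short {l : List Bool} (h : l.length ≤ 1) : invc10 l = 0 := by
  match l with
  | [] => rfl
  | [true] => rfl
  | [false] => rfl
  | a :: b :: t => simp at h

noncomputable def Fb10 (S : ℕ → ℝ) : ℕ → ℝ
  | 0 => S 0
  | 1 => S 1
  | (n+2) => S (n+2) + ((n:ℝ)+2)^2 * Fb10 S n

lemma Fb10_nonneg {S : ℕ → ℝ} (hS : ∀ n, 0 ≤ S n) : ∀ n, 0 ≤ Fb10 S n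
  | 0 => hS 0
  | 1 => hS 1
  | (n+2) => by
    have h1 := Fb10_nonneg hS n
    have h2 := hS (n+2)
    simp only [Fb10]
    positivity

open scoped ComplexOrder

theorem cs10 {A : Type*} [Ring A] [Algebra ℂ A] [StarRing A] [StarModule ℂ A]
    (ω : A →ₗ[ℂ] ℂ) (hωpos : ∀ a : A, 0 ≤ ω (star a * a)) (a b : A) :
    (‖ω (star a * b)‖)^2 ≤ (ω (star a * a)).re * (ω (star b * b)).re := by
  have haa := Complex.nonneg_iff.mp (hωpos a)
  have hbb := Complex.nonneg_iff.mp (hωpos b)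
  have hexp : ∀ lam : ℂ, star (a + lam • b) * (a + lam • b)
      = star a * a + lam • (star a * b) + (starRingEnd ℂ lam) • (star b * a)
        + (starRingEnd ℂ lam * lam) • (star b * b) := by
    intro lam
    simp only [star_add, star_smul, add_mul, mul_add, smul_add, smul_mul_assoc,
      mul_smul_comm, smul_smul, starRingEnd_apply, mul_comm]
    abel
  have hval : ∀ lam : ℂ, ω (star (a + lam • b) * (a + lam • b))
      = ω (star a * a) + lam * ω (star a * b) + (starRingEnd ℂ lam) * ω (star b * a)
        + (starRingEnd ℂ lam * lam) * ω (star b * b) := by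
    intro lam
    rw [hexp lam]
    simp [smul_eq_mul]
  set x := ω (star a * b) with hx
  set y := ω (star b * a) with hy
  -- hermitian symmetry
  have h1 := (Complex.nonneg_iff.mp (hωpos (a + (1:ℂ) • b))).2
  rw [hval 1] at h1
  have h2 := (Complex.nonneg_iff.mp (hωpos (a + Complex.I • b))).2
  rw [hval Complex.I] at h2
  simp [Complex.add_im, Complex.mul_im, ← haa.2, ← hbb.2] at h1 h2
  have hherm : y = starRingEnd ℂ x := by
    apply Complex.ext
    · simp only [Complex.conj_re]; linarith
    · simp only [Complex.conj_im]; linarith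
  set p := (ω (star a * a)).re with hp
  set q := (ω (star b * b)).re with hq
  set r := ‖x‖ with hr
  have haaval : ω (star a * a) = (p : ℂ) := Complex.ext rfl (by simp [← haa.2])
  have hbbval : ω (star b * b) = (q : ℂ) := Complex.ext rfl (by simp [← hbb.2])
  have hquad : ∀ t : ℝ, 0 ≤ p - 2 * t * r ^ 2 + t ^ 2 * (r ^ 2 * q) := by
    intro t
    have h := hωpos (a + ((-(t:ℂ)) * starRingEnd ℂ x) • b)
    rw [hval, hherm, haaval, hbbval] at h
    have hcast : (p : ℂ) + -(t:ℂ) * starRingEnd ℂ x * x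
        + starRingEnd ℂ (-(t:ℂ) * starRingEnd ℂ x) * starRingEnd ℂ x
        + starRingEnd ℂ (-(t:ℂ) * starRingEnd ℂ x) * (-(t:ℂ) * starRingEnd ℂ x) * (q : ℂ)
        = ((p - 2 * t * r ^ 2 + t ^ 2 * (r ^ 2 * q) : ℝ) : ℂ) := by
      have hmc : x * starRingEnd ℂ x = ((r : ℝ) : ℂ) ^ 2 := by
        rw [Complex.mul_conj, Complex.normSq_eq_norm_sq, hr]
        push_cast
        ring
      simp only [map_mul, map_neg, Complex.conj_ofReal, Complex.conj_conj]
      push_cast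
      linear_combination (-2 * (t:ℂ) + (t:ℂ)^2 * (q:ℂ)) * hmc
    rw [hcast] at h
    exact Complex.zero_le_real.mp h
  have hq0 : 0 ≤ q := hbb.1
  rcases eq_or_lt_of_le hq0 with hq1 | hq1
  · by_contra hcon
    push_neg at hcon
    have hrpos : 0 < r ^ 2 := by nlinarith [haa.1]
    have h := hquad ((p + 1) / (2 * r ^ 2))
    rw [← hq1] at h
    have hfe : (p + 1) / (2 * r ^ 2) * (2 * r ^ 2) = p + 1 := by
      have hr0 : r ≠ 0 := fun h0 => by simp [h0] at hrpos
      field_simp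
    nlinarith [h, hrpos]
  · have h := hquad (1 / q)
    have heq : p - 2 * (1 / q) * r ^ 2 + (1 / q) ^ 2 * (r ^ 2 * q) = p - r ^ 2 / q := by
      field_simp
      ring
    rw [heq] at h
    have := (div_le_iff₀ hq1).mp (by linarith : r ^ 2 / q ≤ p)
    linarith

set_option maxHeartbeats 1000000 in
/-- Moment bound for the number operator (Proposition 5 of the paper): for a state
`ω` on a unital ℂ-star-algebra, self-adjoint `φ, π` with `φπ - πφ = i·1`, `k ≥ 2`,
and `C̃ ≥ 1` with `|⟨φ^t⟩| ≤ (C̃ t)^{kt/2}` and `|⟨π^t⟩| ≤ (C̃ t)^{kt/2}` for all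
`t ≥ 1`, one has `|⟨(φ² + π²)^s⟩| ≤ 2(2s+1)(8 C̃ s)^{ks}` for every `s ≥ 1`. -/
theorem stmt_10 {A : Type*} [Ring A] [Algebra ℂ A] [StarRing A] [StarModule ℂ A]
    (ω : A →ₗ[ℂ] ℂ) (hω1 : ω 1 = 1) (hωpos : ∀ a : A, 0 ≤ ω (star a * a))
    (φ π : A) (hφ : star φ = φ) (hπ : star π = π)
    (hccr : φ * π - π * φ = Complex.I • (1 : A))
    (k : ℕ) (hk : 2 ≤ k) (C : ℝ) (hC : 1 ≤ C)
    (hφmom : ∀ t : ℕ, 1 ≤ t →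
      ‖ω (φ ^ t)‖ ≤ (C * t) ^ (((k * t : ℕ) : ℝ) / 2))
    (hπmom : ∀ t : ℕ, 1 ≤ t →
      ‖ω (π ^ t)‖ ≤ (C * t) ^ (((k * t : ℕ) : ℝ) / 2)) :
    ∀ s : ℕ, 1 ≤ s →
      ‖ω ((φ ^ 2 + π ^ 2) ^ s)‖ ≤
        2 * (2 * s + 1) * (8 * C * s) ^ (k * s) := by
  intro s hs
  -- the sorted-moment bound function
  set S : ℕ → ℝ := fun n => (2 * C * n : ℝ) ^ (((k * n : ℕ) : ℝ) / 2) with hSdef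
  have hSnn : ∀ n, 0 ≤ S n := fun n => Real.rpow_nonneg (by positivity) _
  have hS0 : S 0 = 1 := by simp [hSdef]
  -- word products
  set W : List Bool → A := fun l => (l.map fun b => if b then φ else π).prod with hWdef
  have hWnil : W [] = 1 := rfl
  have hWapp : ∀ x y : List Bool, W (x ++ y) = W x * W y := by
    intro x y; simp [hWdef]
  have hWrepT : ∀ a : ℕ, W (List.replicate a true) = φ ^ a := by
    intro a; simp [hWdef]
  have hWrepF : ∀ a : ℕ, W (List.replicate a false) = π ^ a := by
    intro a; simp [hWdef]
  -- bound for sorted words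
  have hbase : ∀ a n : ℕ, a ≤ n → 1 ≤ a →
      (C * a : ℝ) ^ (((k * a : ℕ) : ℝ) / 2) ≤ (2 * C * n : ℝ) ^ (((k * a : ℕ) : ℝ) / 2) := by
    intro a n han ha1
    apply Real.rpow_le_rpow (by positivity) _ (by positivity)
    have : (a:ℝ) ≤ (n:ℝ) := by exact_mod_cast han
    nlinarith
  have hsorted : ∀ a b : ℕ, ‖ω (φ ^ a * π ^ b)‖ ≤ S (a + b) := by
    intro a b
    rcases Nat.eq_zero_or_pos a with ha | ha
    · subst ha
      rcases Nat.eq_zero_or_pos b with hb | hb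
      · subst hb; simp [hω1, hS0]
      · simpa [hSdef] using (hπmom b hb).trans (hbase b b le_rfl hb)
    · rcases Nat.eq_zero_or_pos b with hb | hb
      · subst hb
        simpa [hSdef] using (hφmom a ha).trans (hbase a a le_rfl ha)
      · -- both positive : Cauchy–Schwarz
        have hcs := cs10 ω hωpos (φ ^ a) (π ^ b)
        rw [star_pow, hφ, star_pow, hπ] at hcs
        have hφsq : φ ^ a * φ ^ a = φ ^ (2 * a) := by rw [← pow_add]; ring_nf
        have hπsq : π ^ b * π ^ b = π ^ (2 * b) := by rw [← pow_add]; ring_nf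
        rw [hφsq, hπsq] at hcs
        set n := a + b with hn
        have hXpos : (0:ℝ) < 2 * C * n := by
          have : (1:ℝ) ≤ (n:ℝ) := by
            have : 1 ≤ n := by omega
            exact_mod_cast this
          nlinarith
        -- bounds on the pure moments
        have hrebd : ∀ (c : ℕ), 1 ≤ c → c ≤ n →
            ∀ x : A, ‖ω (x ^ (2 * c))‖ ≤ (C * ((2*c : ℕ) : ℝ)) ^ (((k * (2*c) : ℕ) : ℝ) / 2) →
            (ω (x ^ (2 * c))).re ≤ (2 * C * n : ℝ) ^ ((k * c : ℕ) : ℝ) := by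
          intro c hc1 hcn x hx
          have h1 : (ω (x ^ (2 * c))).re ≤ ‖ω (x ^ (2 * c))‖ := Complex.re_le_norm _
          have h2 : (C * ((2*c : ℕ) : ℝ)) ^ (((k * (2*c) : ℕ) : ℝ) / 2)
              ≤ (2 * C * n : ℝ) ^ (((k * (2*c) : ℕ) : ℝ) / 2) := by
            apply Real.rpow_le_rpow (by positivity) _ (by positivity)
            have : (c:ℝ) ≤ (n:ℝ) := by exact_mod_cast hcn
            push_cast
            nlinarith
          have h3 : (((k * (2*c) : ℕ) : ℝ) / 2) = ((k * c : ℕ) : ℝ) := by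
            push_cast; ring
          rw [h3] at h2 hx
          linarith
        have hφbd := hrebd a ha (by omega) φ (hφmom (2*a) (by omega))
        have hπbd := hrebd b hb (by omega) π (hπmom (2*b) (by omega))
        -- positivity of the diagonal moments
        have hφnn : 0 ≤ (ω (φ ^ (2*a))).re := by
          have := (Complex.nonneg_iff.mp (hωpos (φ ^ a))).1
          rwa [star_pow, hφ, hφsq] at this
        have hπnn : 0 ≤ (ω (π ^ (2*b))).re := by
          have := (Complex.nonneg_iff.mp (hωpos (π ^ b))).1
          rwa [star_pow, hπ, hπsq] at this
        -- combine
        have hprod : (ω (φ ^ (2*a))).re * (ω (π ^ (2*b))).re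
            ≤ (2 * C * n : ℝ) ^ ((k * a : ℕ) : ℝ) * (2 * C * n : ℝ) ^ ((k * b : ℕ) : ℝ) := by
          apply mul_le_mul hφbd hπbd hπnn (Real.rpow_nonneg (le_of_lt hXpos) _)
        have hsq : (2 * C * n : ℝ) ^ ((k * a : ℕ) : ℝ) * (2 * C * n : ℝ) ^ ((k * b : ℕ) : ℝ)
            = S n ^ 2 := by
          rw [← Real.rpow_add hXpos, hSdef]
          simp only []
          rw [sq, ← Real.rpow_add hXpos]
          congr 1
          push_cast [hn]; ring
        have : ‖ω (φ ^ a * π ^ b)‖ ^ 2 ≤ S n ^ 2 := by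
          rw [← hsq]; exact hcs.trans hprod
        exact (pow_le_pow_iff_left₀ (norm_nonneg _) (hSnn n) two_ne_zero).mp this
  -- bound for all words
  have hπφ : π * φ = φ * π - Complex.I • (1 : A) := by
    rw [← hccr]; abel
  have hWcomm : ∀ x y : List Bool,
      W (x ++ false :: true :: y) = W (x ++ true :: false :: y) - Complex.I • W (x ++ y) := by
    intro x y
    have h1 : W (false :: true :: y) = π * (φ * W y) := by
      simp [hWdef]
    have h2 : W (true :: false :: y) = φ * (π * W y) := by
      simp [hWdef]
    rw [hWapp, hWapp, hWapp, h1, h2, ← mul_assoc, ← mul_assoc, mul_assoc (W x) π φ, hπφ]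
    simp only [mul_sub, sub_mul, mul_smul_comm, smul_mul_assoc, mul_one, one_mul, mul_assoc]
  have htri : ∀ z w : ℂ, ‖z - w‖ ≤ ‖z‖ + ‖w‖ := by
    intro z w
    rw [sub_eq_add_neg]
    exact (norm_add_le _ _).trans (by rw [norm_neg])
  have hword : ∀ n, ∀ l : List Bool, l.length = n → ‖ω (W l)‖ ≤ Fb10 S n := by
    intro n
    induction n using Nat.strong_induction_on with
    | _ n IH =>
    have inner : ∀ m, ∀ l : List Bool, l.length = n → invc10 l = m →
        ‖ω (W l)‖ ≤ S n + (m : ℝ) * Fb10 S (n - 2) := by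
      intro m
      induction m using Nat.strong_induction_on with
      | _ m IHm =>
      intro l hlen hinv
      rcases Nat.eq_zero_or_pos m with hm0 | hmpos
      · subst hm0
        have hsort := invc10_sorted hinv
        have hab : l.count true + l.count false = n := by
          have := congrArg List.length hsort
          simp only [List.length_append, List.length_replicate] at this
          omega
        have : W l = φ ^ (l.count true) * π ^ (l.count false) := by
          conv_lhs => rw [hsort]
          rw [hWapp, hWrepT, hWrepF]
        rw [this]
        have := hsorted (l.count true) (l.count false)
        rw [hab] at this
        simpa using this
      · obtain ⟨x, y, hxy⟩ := invc10_exists (by omega : 0 < invc10 l)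
        have hswap : invc10 (x ++ true :: false :: y) + 1 = m := by
          rw [← hinv, hxy, invc10_swap]
        have hlenxy : x.length + 2 + y.length = n := by
          rw [hxy] at hlen; simp at hlen; omega
        have hlen' : (x ++ true :: false :: y).length = n := by
          simp; omega
        have hlen2 : (x ++ y).length = n - 2 := by
          simp; omega
        have hkey : ‖ω (W l)‖
            ≤ ‖ω (W (x ++ true :: false :: y))‖ + ‖ω (W (x ++ y))‖ := by
          rw [hxy, hWcomm, map_sub, map_smul, smul_eq_mul]
          refine (htri _ _).trans ?_
          simp [map_mul, Complex.norm_I]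
        have hW1 := IHm (invc10 (x ++ true :: false :: y)) (by omega)
          (x ++ true :: false :: y) hlen' rfl
        have hW2 := IH (n - 2) (by omega) (x ++ y) hlen2
        have hm' : ((invc10 (x ++ true :: false :: y) : ℝ)) + 1 = (m : ℝ) := by
          exact_mod_cast congrArg (Nat.cast : ℕ → ℝ) hswap
        calc ‖ω (W l)‖
            ≤ ‖ω (W (x ++ true :: false :: y))‖ + ‖ω (W (x ++ y))‖ := hkey
          _ ≤ (S n + (invc10 (x ++ true :: false :: y) : ℝ) * Fb10 S (n - 2)) + Fb10 S (n - 2) := by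
              exact add_le_add hW1 hW2
          _ = S n + (m : ℝ) * Fb10 S (n - 2) := by
              rw [← hm']; ring
    intro l hlen
    have h := inner (invc10 l) l hlen rfl
    rcases Nat.lt_or_ge n 2 with h2 | h2
    · have hz : invc10 l = 0 := invc10_short (by omega)
      rw [hz] at h
      simp only [Nat.cast_zero, zero_mul, add_zero] at h
      interval_cases n
      · exact h
      · exact h
    · obtain ⟨j, rfl⟩ : ∃ j, n = j + 2 := ⟨n - 2, by omega⟩
      have hFb : Fb10 S (j + 2) = S (j + 2) + ((j : ℝ) + 2) ^ 2 * Fb10 S j := rfl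
      rw [hFb]
      simp only [Nat.add_sub_cancel] at h
      have hle : invc10 l ≤ (j + 2) ^ 2 := hlen ▸ invc10_le_sq l
      have hleR : (invc10 l : ℝ) ≤ ((j : ℝ) + 2) ^ 2 := by
        exact_mod_cast hle
      have hF := Fb10_nonneg hSnn j
      nlinarith [h, hF, hleR]
  -- expansion of the power of φ² + π²
  have hexp : ∀ t : ℕ, ∀ l : List Bool,
      ‖ω (W l * (φ ^ 2 + π ^ 2) ^ t)‖ ≤ 2 ^ t * Fb10 S (l.length + 2 * t) := by
    intro t
    induction t with
    | zero =>
      intro l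
      simp only [pow_zero, mul_one, Nat.mul_zero, Nat.add_zero, one_mul]
      exact hword _ l rfl
    | succ t IHt =>
      intro l
      have hWtt : W (l ++ [true, true]) = W l * φ ^ 2 := by
        rw [hWapp]; simp [hWdef, sq, mul_assoc]
      have hWff : W (l ++ [false, false]) = W l * π ^ 2 := by
        rw [hWapp]; simp [hWdef, sq, mul_assoc]
      have hsplit : W l * (φ ^ 2 + π ^ 2) ^ (t + 1)
          = W (l ++ [true, true]) * (φ ^ 2 + π ^ 2) ^ t
            + W (l ++ [false, false]) * (φ ^ 2 + π ^ 2) ^ t := by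
        rw [hWtt, hWff, pow_succ' (φ ^ 2 + π ^ 2) t, ← mul_assoc, mul_add, add_mul]
      rw [hsplit, map_add]
      have hT := IHt (l ++ [true, true])
      have hF := IHt (l ++ [false, false])
      have hlen : (l ++ [true, true]).length + 2 * t = l.length + 2 * (t + 1) := by
        simp; omega
      have hlen2 : (l ++ [false, false]).length + 2 * t = l.length + 2 * (t + 1) := by
        simp; omega
      rw [hlen] at hT
      rw [hlen2] at hF
      calc ‖ω (W (l ++ [true, true]) * (φ ^ 2 + π ^ 2) ^ t)
              + ω (W (l ++ [false, false]) * (φ ^ 2 + π ^ 2) ^ t)‖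
          ≤ ‖ω (W (l ++ [true, true]) * (φ ^ 2 + π ^ 2) ^ t)‖
            + ‖ω (W (l ++ [false, false]) * (φ ^ 2 + π ^ 2) ^ t)‖ :=
            norm_add_le _ _
        _ ≤ 2 ^ t * Fb10 S (l.length + 2 * (t + 1)) + 2 ^ t * Fb10 S (l.length + 2 * (t + 1)) :=
            add_le_add hT hF
        _ = 2 ^ (t + 1) * Fb10 S (l.length + 2 * (t + 1)) := by ring
  -- bound for Fb10 at even arguments
  have hF2 : ∀ j : ℕ, j ≤ s → Fb10 S (2 * j) ≤ ((j : ℝ) + 1) * (4 * C * s) ^ (k * j) := by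
    intro j
    induction j with
    | zero =>
      intro _
      simp only [Nat.mul_zero, pow_zero, Nat.cast_zero, zero_add, one_mul]
      show Fb10 S 0 ≤ 1
      rw [show Fb10 S 0 = S 0 from rfl, hS0]
    | succ j IHj =>
      intro hj
      have hj' : j ≤ s := by omega
      have hIH := IHj hj'
      have h2j : 2 * (j + 1) = 2 * j + 2 := by ring
      rw [h2j]
      have hFb : Fb10 S (2 * j + 2) = S (2 * j + 2) + (((2 * j : ℕ) : ℝ) + 2) ^ 2 * Fb10 S (2 * j) :=
        rfl
      rw [hFb]
      have hsC : (1:ℝ) ≤ (s:ℝ) := by exact_mod_cast hs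
      have hjs : ((j:ℝ) + 1) ≤ (s:ℝ) := by exact_mod_cast hj
      have hXnn : (0:ℝ) ≤ 4 * C * s := by positivity
      have hX1 : (1:ℝ) ≤ 4 * C * s := by nlinarith
      -- first term
      have hS1 : S (2 * j + 2) ≤ (4 * C * s) ^ (k * (j + 1)) := by
        have he : (((k * (2 * j + 2) : ℕ) : ℝ) / 2) = ((k * (j + 1) : ℕ) : ℝ) := by
          push_cast; ring
        have : S (2 * j + 2) = (2 * C * ((2 * j + 2 : ℕ) : ℝ)) ^ (((k * (2 * j + 2) : ℕ) : ℝ) / 2) := by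
          rw [hSdef]
        rw [this, he, Real.rpow_natCast]
        apply pow_le_pow_left₀ (by positivity)
        push_cast
        nlinarith
      -- second term
      have hsq : (((2 * j : ℕ) : ℝ) + 2) ^ 2 ≤ (4 * C * s) ^ k := by
        have h1 : (((2 * j : ℕ) : ℝ) + 2) ^ 2 ≤ (4 * C * s) ^ 2 := by
          apply pow_le_pow_left₀ (by positivity)
          push_cast
          nlinarith
        have h2 : (4 * C * (s:ℝ)) ^ 2 ≤ (4 * C * s) ^ k := pow_le_pow_right₀ hX1 hk
        linarith
      have hpowadd : (4 * C * (s:ℝ)) ^ (k * (j + 1)) = (4 * C * s) ^ k * (4 * C * s) ^ (k * j) := by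
        rw [← pow_add]
        congr 1
        ring
      have hFnn := Fb10_nonneg hSnn (2 * j)
      have hpnn : (0:ℝ) ≤ (4 * C * (s:ℝ)) ^ (k * j) := by positivity
      have hknn : (0:ℝ) ≤ (4 * C * (s:ℝ)) ^ k := by positivity
      calc S (2 * j + 2) + (((2 * j : ℕ) : ℝ) + 2) ^ 2 * Fb10 S (2 * j)
          ≤ (4 * C * s) ^ (k * (j + 1)) + (4 * C * s) ^ k * (((j:ℝ) + 1) * (4 * C * s) ^ (k * j)) := by
            apply add_le_add hS1
            calc (((2 * j : ℕ) : ℝ) + 2) ^ 2 * Fb10 S (2 * j)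
                ≤ (4 * C * s) ^ k * Fb10 S (2 * j) := mul_le_mul_of_nonneg_right hsq hFnn
              _ ≤ (4 * C * s) ^ k * (((j:ℝ) + 1) * (4 * C * s) ^ (k * j)) :=
                  mul_le_mul_of_nonneg_left hIH hknn
        _ = (((j + 1 : ℕ) : ℝ) + 1) * (4 * C * s) ^ (k * (j + 1)) := by
            rw [hpowadd]; push_cast; ring
  -- conclude
  have hmain := hexp s []
  rw [hWnil, one_mul] at hmain
  simp only [List.length_nil, Nat.zero_add] at hmain
  have hFs := hF2 s le_rfl
  have hA : (0:ℝ) ≤ (4 * C * s) ^ (k * s) := by positivity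
  have h2s : (0:ℝ) ≤ 2 ^ s := by positivity
  have h1 : ((s:ℝ) + 1) ≤ 2 ^ s := by
    exact_mod_cast Nat.succ_le_of_lt (Nat.lt_two_pow_self (n := s))
  have h2 : (2:ℝ) ^ (2 * s) ≤ 2 ^ (k * s) :=
    pow_le_pow_right₀ one_le_two (Nat.mul_le_mul_right s hk)
  have h3 : (2:ℝ) ^ (2 * s) = 2 ^ s * 2 ^ s := by rw [two_mul, pow_add]
  have h8 : (8 * C * (s:ℝ)) ^ (k * s) = 2 ^ (k * s) * (4 * C * s) ^ (k * s) := by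
    rw [← mul_pow]; ring_nf
  calc ‖ω ((φ ^ 2 + π ^ 2) ^ s)‖ ≤ 2 ^ s * Fb10 S (2 * s) := hmain
    _ ≤ 2 ^ s * (((s : ℝ) + 1) * (4 * C * s) ^ (k * s)) :=
        mul_le_mul_of_nonneg_left hFs h2s
    _ ≤ (2 ^ s * 2 ^ s) * (4 * C * s) ^ (k * s) := by
        rw [← mul_assoc]
        exact mul_le_mul_of_nonneg_right (mul_le_mul_of_nonneg_left h1 h2s) hA
    _ ≤ 2 ^ (k * s) * (4 * C * s) ^ (k * s) := by
        rw [← h3]; exact mul_le_mul_of_nonneg_right h2 hA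
    _ ≤ 2 * (2 * s + 1) * (8 * C * s) ^ (k * s) := by
        rw [h8]
        have hone : (1:ℝ) ≤ 2 * (2 * (s:ℝ) + 1) := by
          have : (1:ℝ) ≤ (s:ℝ) := by exact_mod_cast hs
          nlinarith
        nlinarith [mul_nonneg (pow_nonneg (by norm_num : (0:ℝ) ≤ 2) (k*s)) hA]
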